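/- arXiv:1702.04530 — 5 statements merged into one kernel-verified Lean document; each statement's English description precedes it below -/
import Mathlib

section
/- Let n ≥ 2 be an integer, let α, β ∈ ℝ with α + β > 0, and let c ∈ ℝ^{n−1}. Then there exist δ ∈ (0, π/2) and η ∈ (0, π/2) such that for all λ ∈ S_{π/2+η} and all z = (z_1,…,z_{n−1}) with each z_k ∈ Σ_δ, one has: λ ≠ 0, (α+β)|z|_− − c·z ≠ 0, and λ + (α+β)|z|_− − c·z ≠ 0. (This says that every γ-principal part of the symbol P(λ,z) = λ + α|z|_− + β√(λ+|z|_−²) − c·z is nonvanishing on the product of sectors, i.e. P is N-parabolic.) -/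
open Complex Real Set

/-- The sector `S_κ = {r e^{iφ} : r > 0, |φ| < κ}` in the complex plane. -/
def sectorS (κ : ℝ) : Set ℂ :=
  {w | ∃ r φ : ℝ, 0 < r ∧ |φ| < κ ∧ w = (r : ℂ) * Complex.exp ((φ : ℂ) * Complex.I)}

/-- The sector `Σ_δ = {r e^{iφ} : r ∈ ℝ \ {0}, |φ - π/2| < δ}` in the complex plane. -/
def sectorSigma (δ : ℝ) : Set ℂ :=
  {w | ∃ r φ : ℝ, r ≠ 0 ∧ |φ - π / 2| < δ ∧ w = (r : ℂ) * Complex.exp ((φ : ℂ) * Complex.I)}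

/-- `|z|_- = √(-∑ z_k²)`, using the principal branch of the square root
(`w ^ (1/2) = exp((1/2) log w)` with `arg ∈ (-π, π]`). -/
noncomputable def zMinus {m : ℕ} (z : Fin m → ℂ) : ℂ :=
  (-(∑ k, (z k) ^ 2)) ^ ((1 : ℂ) / 2)

/-- `c·z = ∑ c_k z_k`. -/
noncomputable def cDot {m : ℕ} (c : Fin m → ℝ) (z : Fin m → ℂ) : ℂ :=
  ∑ k, (c k : ℂ) * z k

lemma sector_facts {δ : ℝ} (hδ0 : 0 < δ) (hδ : δ ≤ 1/2) {u : ℂ} (hu : u ∈ sectorSigma δ) :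
    u ≠ 0 ∧ |u.re| ≤ δ * ‖u‖ ∧
      (1 - 2*δ^2) * (‖u‖)^2 ≤ (-(u^2)).re := by
  obtain ⟨r, φ, hr, hφ, rfl⟩ := hu
  have hφt : φ = π/2 + (φ - π/2) := by ring
  set t := φ - π/2 with ht
  have habs : ‖(r:ℂ) * Complex.exp ((φ:ℂ)*I)‖ = |r| := by
    rw [norm_mul, Complex.norm_real, Real.norm_eq_abs, Complex.norm_exp_ofReal_mul_I, mul_one]
  have hre : (((r:ℂ) * Complex.exp ((φ:ℂ)*I))).re = r * Real.cos φ := by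
    rw [Complex.re_ofReal_mul, Complex.exp_ofReal_mul_I_re]
  have hcosφ : Real.cos φ = -Real.sin t := by
    rw [hφt, Real.cos_add]; simp
  have hsq : (((r:ℂ) * Complex.exp ((φ:ℂ)*I)))^2 = ((r^2 : ℝ):ℂ) * Complex.exp (((2*φ:ℝ):ℂ)*I) := by
    rw [mul_pow, sq (Complex.exp _), ← Complex.exp_add]
    push_cast; ring_nf
  have hresq : ((-(((r:ℂ) * Complex.exp ((φ:ℂ)*I)))^2)).re = -(r^2 * Real.cos (2*φ)) := by
    rw [Complex.neg_re, hsq, Complex.re_ofReal_mul, Complex.exp_ofReal_mul_I_re]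
  have hcos2φ : Real.cos (2*φ) = -Real.cos (2*t) := by
    have : 2*φ = π + 2*t := by rw [hφt]; ring
    rw [this, Real.cos_add]; simp
  clear_value t
  refine ⟨?_, ?_, ?_⟩
  · exact mul_ne_zero (by exact_mod_cast hr) (Complex.exp_ne_zero _)
  · rw [hre, habs, abs_mul, hcosφ, abs_neg]
    have h1 : |Real.sin t| ≤ |t| := Real.abs_sin_le_abs
    have h2 : |t| < δ := hφ
    have : |Real.sin t| ≤ δ := by linarith
    calc |r| * |Real.sin t| ≤ |r| * δ := by gcongr
      _ = δ * |r| := by ring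
  · rw [hresq, habs, hcos2φ, _root_.sq_abs]
    have h1 : 1 - (2*t) ^ 2 / 2 ≤ Real.cos (2*t) := Real.one_sub_sq_div_two_le_cos
    have h2 : |t| < δ := hφ
    have h3 : t ^ 2 ≤ δ ^ 2 := by nlinarith [abs_nonneg t, neg_abs_le t, le_abs_self t]
    nlinarith [mul_le_mul_of_nonneg_left h1 (sq_nonneg r), mul_le_mul_of_nonneg_left h3 (sq_nonneg r)]

set_option maxHeartbeats 1600000 in
theorem statement0 (n : ℕ) (hn : 2 ≤ n) (α β : ℝ) (hαβ : 0 < α + β)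
    (c : Fin (n - 1) → ℝ) :
    ∃ δ ∈ Ioo (0 : ℝ) (π / 2), ∃ η ∈ Ioo (0 : ℝ) (π / 2),
      ∀ lam ∈ sectorS (π / 2 + η), ∀ z : Fin (n - 1) → ℂ,
        (∀ k, z k ∈ sectorSigma δ) →
          lam ≠ 0 ∧
          ((α + β : ℝ) : ℂ) * zMinus z - cDot c z ≠ 0 ∧
          lam + ((α + β : ℝ) : ℂ) * zMinus z - cDot c z ≠ 0 := by
  have hπ : (3:ℝ) < π := Real.pi_gt_three
  set C : ℝ := ∑ k, |c k| with hCdef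
  have hC0 : 0 ≤ C := Finset.sum_nonneg fun k _ => abs_nonneg _
  set A : ℝ := (α+β)/4 with hAdef
  set B : ℝ := (α+β) + C + 1 with hBdef
  have hA : 0 < A := by positivity
  have hB : 0 < B := by positivity
  set δ : ℝ := min (1/2) ((α+β)/(4*(C+1))) with hδdef
  have hδ0 : 0 < δ := lt_min (by norm_num) (by positivity)
  have hδhalf : δ ≤ 1/2 := min_le_left _ _
  have hδC : δ * C ≤ (α+β)/4 := by
    have h1 : δ ≤ (α+β)/(4*(C+1)) := min_le_right _ _
    have h2 : δ * C ≤ ((α+β)/(4*(C+1))) * C := by gcongr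
    have h3 : ((α+β)/(4*(C+1))) * C ≤ (α+β)/4 := by
      rw [div_mul_eq_mul_div, div_le_div_iff₀ (by positivity) (by norm_num)]
      nlinarith
    linarith
  clear_value δ
  clear_value C A B
  set η : ℝ := Real.arctan (A/B) / 2 with hηdef
  have harc0 : 0 < Real.arctan (A/B) := by
    rw [← Real.arctan_zero]; exact Real.arctan_strictMono (div_pos hA hB)
  have harclt : Real.arctan (A/B) < π/2 := Real.arctan_lt_pi_div_two _
  have hη0 : 0 < η := by positivity
  have hηlt2 : η < π/2 := by rw [hηdef]; linarith
  have htanη : Real.tan η < A / B := by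
    have h := Real.tan_lt_tan_of_nonneg_of_lt_pi_div_two hη0.le harclt (by rw [hηdef]; linarith)
    rwa [Real.tan_arctan] at h
  have hcosη : 0 < Real.cos η := Real.cos_pos_of_mem_Ioo ⟨by linarith, hηlt2⟩
  have hsinη0 : 0 ≤ Real.sin η := Real.sin_nonneg_of_nonneg_of_le_pi hη0.le (by linarith)
  have hkey : B * Real.sin η < A * Real.cos η := by
    rw [Real.tan_eq_sin_div_cos, div_lt_div_iff₀ hcosη hB] at htanη
    linarith
  clear_value η
  clear hηdef
  refine ⟨δ, ⟨hδ0, by linarith⟩, η, ⟨hη0, hηlt2⟩, ?_⟩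
  rintro lam ⟨r, φ, hr, hφ, rfl⟩ z hz
  have hfacts := fun k => sector_facts hδ0 hδhalf (hz k)
  set S : ℝ := ∑ k, (‖z k‖)^2 with hSdef
  have hS0 : 0 < S := by
    have hmem : (⟨0, by omega⟩ : Fin (n-1)) ∈ Finset.univ := Finset.mem_univ _
    refine Finset.sum_pos' (fun k _ => sq_nonneg _) ⟨_, hmem, ?_⟩
    have hne := (hfacts ⟨0, by omega⟩).1
    exact pow_pos (norm_pos_iff.2 hne) 2
  set s : ℝ := Real.sqrt S with hsdef
  have hs0 : 0 < s := Real.sqrt_pos.2 hS0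
  have hs2 : s^2 = S := Real.sq_sqrt hS0.le
  set w0 : ℂ := -(∑ k, (z k)^2) with hw0def
  have hw0re : (1 - 2*δ^2) * S ≤ w0.re := by
    have h1 : w0.re = ∑ k, (-((z k)^2)).re := by
      rw [hw0def, ← Finset.sum_neg_distrib, Complex.re_sum]
    rw [h1, hSdef, Finset.mul_sum]
    exact Finset.sum_le_sum fun k _ => (hfacts k).2.2
  have hw0abs : ‖w0‖ ≤ S := by
    rw [hw0def, norm_neg, hSdef]
    refine le_trans (norm_sum_le _ _) (le_of_eq (Finset.sum_congr rfl fun k _ => ?_))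
    rw [norm_pow]
  have hrele : w0.re ≤ ‖w0‖ := Complex.re_le_norm _
  have hδsq : 2*δ^2 ≤ 1/2 := by nlinarith
  have hx12 : (1:ℂ)/2 = (2⁻¹ : ℂ) := by norm_num
  have hxre : s/2 ≤ (zMinus z).re := by
    rw [zMinus, hx12, ← hw0def, Complex.cpow_inv_two_re]
    have h1 : S/4 ≤ (‖w0‖ + w0.re)/2 := by nlinarith [hw0re, hrele, hδsq, hS0.le]
    have h4 : Real.sqrt 4 = 2 := by
      rw [show (4:ℝ) = 2^2 by norm_num, Real.sqrt_sq (by norm_num : (0:ℝ) ≤ 2)]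
    calc s/2 = Real.sqrt (S/4) := by rw [Real.sqrt_div hS0.le, h4, hsdef]
      _ ≤ _ := Real.sqrt_le_sqrt h1
  have hxim : |(zMinus z).im| ≤ δ * s := by
    rw [zMinus, hx12, ← hw0def, Complex.abs_cpow_inv_two_im]
    have h1 : (‖w0‖ - w0.re)/2 ≤ δ^2 * S := by linarith [hw0abs, hw0re]
    calc Real.sqrt ((‖w0‖ - w0.re)/2) ≤ Real.sqrt (δ^2 * S) := Real.sqrt_le_sqrt h1
      _ = δ * s := by rw [Real.sqrt_mul (sq_nonneg δ) S, Real.sqrt_sq hδ0.le, hsdef]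
  have hzk_le : ∀ k, ‖z k‖ ≤ s := by
    intro k
    have h1 : (‖z k‖)^2 ≤ S :=
      Finset.single_le_sum (f := fun k => (‖z k‖)^2) (fun k _ => sq_nonneg _)
        (Finset.mem_univ k)
    have h2 := Real.sqrt_le_sqrt h1
    rwa [Real.sqrt_sq (norm_nonneg _), ← hsdef] at h2
  have hcd_re : |(cDot c z).re| ≤ δ * (C * s) := by
    rw [cDot, Complex.re_sum]
    calc |∑ k, ((c k : ℂ) * z k).re| ≤ ∑ k, |((c k : ℂ) * z k).re| :=
          Finset.abs_sum_le_sum_abs _ _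
      _ ≤ ∑ k, |c k| * (δ * s) := by
          refine Finset.sum_le_sum fun k _ => ?_
          rw [Complex.re_ofReal_mul, abs_mul]
          have h1 := (hfacts k).2.1
          have h2 := hzk_le k
          have : |(z k).re| ≤ δ * s := le_trans h1 (by gcongr)
          exact mul_le_mul_of_nonneg_left this (abs_nonneg _)
      _ = δ * (C * s) := by rw [← Finset.sum_mul, ← hCdef]; ring
  have hcd_im : |(cDot c z).im| ≤ C * s := by
    rw [cDot, Complex.im_sum]
    calc |∑ k, ((c k : ℂ) * z k).im| ≤ ∑ k, |((c k : ℂ) * z k).im| :=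
          Finset.abs_sum_le_sum_abs _ _
      _ ≤ ∑ k, |c k| * s := by
          refine Finset.sum_le_sum fun k _ => ?_
          rw [Complex.im_ofReal_mul, abs_mul]
          have h1 : |(z k).im| ≤ s := le_trans (Complex.abs_im_le_norm _) (hzk_le k)
          exact mul_le_mul_of_nonneg_left h1 (abs_nonneg _)
      _ = C * s := by rw [← Finset.sum_mul, ← hCdef]
  clear_value s S w0
  set x : ℂ := zMinus z with hxdef
  clear_value x
  set W : ℂ := ((α + β : ℝ) : ℂ) * x - cDot c z with hWdef
  have hWre : A * s ≤ W.re := by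
    have h1 : W.re = (α+β) * x.re - (cDot c z).re := by
      rw [hWdef, Complex.sub_re, Complex.re_ofReal_mul]
    rw [h1, hAdef]
    have h2 := abs_le.1 hcd_re
    have h3 := mul_le_mul_of_nonneg_left hxre hαβ.le
    have h4 := mul_le_mul_of_nonneg_right hδC hs0.le
    linarith only [h2.2, h3, h4]
  have hWim : |W.im| ≤ B * s := by
    have h1 : W.im = (α+β) * x.im - (cDot c z).im := by
      rw [hWdef, Complex.sub_im, Complex.im_ofReal_mul]
    rw [h1, hBdef]
    have h2 := abs_le.1 hcd_im
    have h3 := abs_le.1 hxim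
    have h4 : |(α+β) * x.im| ≤ (α+β) * (δ*s) := by
      rw [abs_mul, abs_of_pos hαβ]
      exact mul_le_mul_of_nonneg_left hxim hαβ.le
    have h5 := abs_le.1 h4
    have hδs : δ * s ≤ s := by
      have := mul_le_mul_of_nonneg_right (show δ ≤ 1 by linarith only [hδhalf]) hs0.le
      linarith only [this]
    have h6 : (α+β) * (δ*s) ≤ (α+β) * s := mul_le_mul_of_nonneg_left hδs hαβ.le
    rw [abs_le]
    constructor <;> linarith only [h2.1, h2.2, h5.1, h5.2, h6, hs0.le]
  have hWre0 : 0 < W.re := lt_of_lt_of_le (by positivity) hWre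
  clear_value W
  have hlamre : ((r:ℂ) * Complex.exp ((φ:ℂ)*I)).re = r * Real.cos φ := by
    rw [Complex.re_ofReal_mul, Complex.exp_ofReal_mul_I_re]
  have hlamim : ((r:ℂ) * Complex.exp ((φ:ℂ)*I)).im = r * Real.sin φ := by
    rw [Complex.im_ofReal_mul, Complex.exp_ofReal_mul_I_im]
  refine ⟨mul_ne_zero (by exact_mod_cast hr.ne') (Complex.exp_ne_zero _), ?_, ?_⟩
  · intro h
    rw [h] at hWre0
    simp at hWre0
  · intro h
    have h2 : ((r:ℂ) * Complex.exp ((φ:ℂ)*I)) + W = 0 := by rw [hWdef, ← h]; ring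
    have h3 : ((r:ℂ) * Complex.exp ((φ:ℂ)*I)) = -W := by linear_combination h2
    have hre2 : r * Real.cos φ = -W.re := by rw [← hlamre, h3, Complex.neg_re]
    have him2 : r * Real.sin φ = -W.im := by rw [← hlamim, h3, Complex.neg_im]
    -- cos φ < 0, so |φ| > π/2
    have hcosneg : Real.cos φ < 0 := by
      by_contra hcc
      push_neg at hcc
      linarith only [hre2, hWre0, mul_nonneg hr.le hcc]
    have habs1 : π/2 < |φ| := by
      by_contra hcc
      push_neg at hcc
      exact absurd (Real.cos_nonneg_of_mem_Icc ⟨neg_le_of_abs_le hcc, le_of_abs_le hcc⟩)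
        (not_le.2 hcosneg)
    obtain ⟨t, htdef⟩ : ∃ t, |φ| = π/2 + t := ⟨|φ| - π/2, by ring⟩
    have ht0 : 0 < t := by linarith only [habs1, htdef]
    have htη : t < η := by linarith only [hφ, htdef]
    have hcosabs : Real.cos |φ| = -Real.sin t := by
      rw [htdef, Real.cos_add]; simp
    have hsinabs : Real.sin |φ| = Real.cos t := by
      rw [htdef, Real.sin_add]; simp
    have hcosφ' : Real.cos φ = -Real.sin t := by
      rw [← Real.cos_abs, hcosabs]
    have hsinφ' : |Real.sin φ| = Real.cos t := by
      rcases le_or_gt 0 φ with hp | hp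
      · rw [_root_.abs_of_nonneg hp] at hsinabs htdef
        rw [← hsinabs]
        exact _root_.abs_of_nonneg (Real.sin_nonneg_of_nonneg_of_le_pi hp
          (by linarith only [htdef, htη, hηlt2]))
      · rw [_root_.abs_of_neg hp] at hsinabs htdef
        rw [Real.sin_neg] at hsinabs
        rw [← hsinabs]
        refine _root_.abs_of_nonpos (Real.sin_nonpos_of_nonpos_of_neg_pi_le hp.le ?_)
        linarith only [htdef, htη, hηlt2]
    have hsint : Real.sin t ≤ Real.sin η := by
      have h5 := Real.sin_lt_sin_of_lt_of_le_pi_div_two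
        (x := t) (y := η) (by linarith only [ht0, hπ]) hηlt2.le htη
      linarith only [h5]
    have hcost : Real.cos η ≤ Real.cos t :=
      Real.cos_le_cos_of_nonneg_of_le_pi ht0.le (by linarith only [hηlt2, hπ]) htη.le
    have e1 : A * s ≤ r * Real.sin η := by
      have h5 : A * s ≤ -(r * Real.cos φ) := by rw [hre2]; linarith only [hWre]
      rw [hcosφ'] at h5
      have h6 : r * Real.sin t ≤ r * Real.sin η := mul_le_mul_of_nonneg_left hsint hr.le
      linarith only [h5, h6]
    have e2 : r * Real.cos η ≤ B * s := by
      have h7 : |r * Real.sin φ| = |W.im| := by rw [him2, abs_neg]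
      have h8 : r * Real.cos t ≤ B * s := by
        rw [← hsinφ']
        calc r * |Real.sin φ| = |r * Real.sin φ| := by
              rw [abs_mul, abs_of_pos hr]
          _ = |W.im| := h7
          _ ≤ B * s := hWim
      have h9 : r * Real.cos η ≤ r * Real.cos t := mul_le_mul_of_nonneg_left hcost hr.le
      linarith only [h8, h9]
    have m1 := mul_le_mul_of_nonneg_right e1 hcosη.le
    have m2 := mul_le_mul_of_nonneg_right e2 hsinη0
    have m3 := mul_lt_mul_of_pos_right hkey hs0
    linarith only [m1, m2, m3]
end

section
/- Let n ≥ 2 be an integer and δ ∈ (0, π/4). For every z = (z_1,…,z_{n−1}) with each z_k ∈ Σ_δ and ∑_{k=1}^{n−1} |z_k|² = 1, one has ||z|_−|² ≥ cos(2δ) and Re(|z|_−) ≥ √(cos(2δ))·cos(δ). -/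
open Complex Real Set

lemma key_re (δ : ℝ) (hδ1 : 0 < δ) (hδ2 : δ < π / 4) (w : ℂ) (hw : w ∈ sectorSigma δ) :
    Real.cos (2 * δ) * ‖w‖ ^ 2 ≤ (-(w ^ 2)).re := by
  obtain ⟨r, φ, hr, hφ, rfl⟩ := hw
  have habs : ‖(r : ℂ) * Complex.exp ((φ : ℂ) * Complex.I)‖ = |r| := by
    simp [Complex.norm_exp]
  have hre : (-(((r : ℂ) * Complex.exp ((φ : ℂ) * Complex.I)) ^ 2)).re
      = r ^ 2 * (Real.sin φ ^ 2 - Real.cos φ ^ 2) := by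
    simp [Complex.exp_mul_I, mul_pow, Complex.mul_re, Complex.mul_im, pow_two,
      Complex.cos_ofReal_re, Complex.sin_ofReal_re]
    ring
  have hcc : Real.cos (2 * δ) ≤ Real.cos (2 * (φ - π / 2)) := by
    have h1 : |2 * (φ - π / 2)| ≤ 2 * δ := by
      rw [abs_mul, _root_.abs_two]; nlinarith [hφ.le]
    have := Real.cos_le_cos_of_nonneg_of_le_pi (abs_nonneg (2 * (φ - π / 2)))
      (by nlinarith [Real.pi_pos]) h1
    rwa [Real.cos_abs] at this
  have hid : Real.cos (2 * (φ - π / 2)) = Real.sin φ ^ 2 - Real.cos φ ^ 2 := by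
    have h1 : Real.cos (φ - π / 2) = Real.sin φ := by
      rw [show φ - π / 2 = -(π / 2 - φ) by ring, Real.cos_neg, Real.cos_pi_div_two_sub]
    have h2 := Real.cos_sq_add_sin_sq φ
    rw [Real.cos_two_mul, h1]
    nlinarith
  rw [hre, habs, _root_.sq_abs]
  nlinarith [sq_nonneg r]

theorem statement1 (n : ℕ) (hn : 2 ≤ n) (δ : ℝ) (hδ : δ ∈ Ioo (0 : ℝ) (π / 4))
    (z : Fin (n - 1) → ℂ) (hz : ∀ k, z k ∈ sectorSigma δ)
    (hnorm : ∑ k, ‖z k‖ ^ 2 = 1) :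
    Real.cos (2 * δ) ≤ ‖zMinus z‖ ^ 2 ∧
    Real.sqrt (Real.cos (2 * δ)) * Real.cos δ ≤ (zMinus z).re := by
  obtain ⟨hδ1, hδ2⟩ := hδ
  set w : ℂ := -(∑ k, (z k) ^ 2) with hw
  have hcpos : 0 < Real.cos (2 * δ) := by
    apply Real.cos_pos_of_mem_Ioo
    constructor <;> nlinarith [Real.pi_pos]
  have hre : Real.cos (2 * δ) ≤ w.re := by
    have h1 : w.re = ∑ k, (-(z k ^ 2)).re := by
      rw [hw]; simp [Complex.re_sum]
    have h2 : ∑ k, Real.cos (2 * δ) * ‖z k‖ ^ 2 ≤ ∑ k, (-(z k ^ 2)).re :=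
      Finset.sum_le_sum fun k _ => key_re δ hδ1 hδ2 (z k) (hz k)
    rw [h1, ← Finset.mul_sum, hnorm, mul_one] at *
    exact h2
  have habs_ge : Real.cos (2 * δ) ≤ ‖w‖ := le_trans hre (Complex.re_le_norm w)
  have hw0 : w ≠ 0 := by
    intro h
    rw [h] at hre; simp at hre; linarith
  have hhalf : ((1 : ℂ) / 2) = (2⁻¹ : ℂ) := by norm_num
  have habs : ‖zMinus z‖ ^ 2 = ‖w‖ := by
    rw [zMinus, ← hw, hhalf]
    rw [show ((2⁻¹ : ℂ)) = ((2⁻¹ : ℝ) : ℂ) by norm_num, Complex.norm_cpow_real w (2⁻¹ : ℝ)]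
    rw [← Real.rpow_natCast (‖w‖ ^ (2⁻¹ : ℝ)) 2, ← Real.rpow_mul (norm_nonneg w)]
    norm_num
  constructor
  · rw [habs]; exact habs_ge
  · rw [zMinus, ← hw, hhalf, Complex.cpow_inv_two_re]
    have h1 : Real.sqrt (Real.cos (2 * δ)) * Real.cos δ ≤ Real.sqrt (Real.cos (2 * δ)) := by
      nlinarith [Real.sqrt_nonneg (Real.cos (2 * δ)), Real.cos_le_one δ]
    refine h1.trans (Real.sqrt_le_sqrt ?_)
    linarith
end

section
/- Let q ∈ (1,∞) and σ ∈ (1/q, 1). There is a constant C = C(q,M) > 0, independent of T, such that for every T > 0 and all strongly measurable u : (0,T) → X and v : (0,T) → Y with finite L_∞ and W_q^σ norms, one has ‖uv‖_{W_q^σ((0,T),Z)} ≤ C·[ ‖u‖_{L_∞(0,T;X)}·‖v‖_{W_q^σ((0,T),Y)} + ‖v‖_{L_∞(0,T;Y)}·‖u‖_{W_q^σ((0,T),X)} ]. -/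
open MeasureTheory Set ENNReal

/-- The `W_q^σ((0,T),X)` Sobolev–Slobodeckii norm, valued in `ℝ≥0∞`. -/
noncomputable def wsNorm {X : Type*} [NormedAddCommGroup X] (q σ T : ℝ) (u : ℝ → X) : ℝ≥0∞ :=
  (∫⁻ t in Ioo (0:ℝ) T, (‖u t‖₊ : ℝ≥0∞) ^ q) ^ (1 / q) +
    (∫⁻ t in Ioo (0:ℝ) T, ∫⁻ s in Ioo (0:ℝ) T,
        (‖u t - u s‖₊ : ℝ≥0∞) ^ q / (ENNReal.ofReal |t - s|) ^ (1 + σ * q)) ^ (1 / q)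

/-- The `L_∞(0,T;X)` norm (essential supremum), valued in `ℝ≥0∞`. -/
noncomputable def linfNorm {X : Type*} [NormedAddCommGroup X] (T : ℝ) (u : ℝ → X) : ℝ≥0∞ :=
  essSup (fun t => (‖u t‖₊ : ℝ≥0∞)) (volume.restrict (Ioo (0:ℝ) T))

/-- The `C^ρ([0,T],X)` Hölder norm, valued in `ℝ≥0∞`. -/
noncomputable def cHolderNorm {X : Type*} [NormedAddCommGroup X] (ρ T : ℝ) (u : ℝ → X) : ℝ≥0∞ :=
  (⨆ t ∈ Icc (0:ℝ) T, (‖u t‖₊ : ℝ≥0∞)) +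
    ⨆ t ∈ Icc (0:ℝ) T, ⨆ s ∈ Icc (0:ℝ) T, ⨆ _ : t ≠ s,
      (‖u t - u s‖₊ : ℝ≥0∞) / (ENNReal.ofReal |t - s|) ^ ρ


lemma wsNorm_congr {X : Type*} [NormedAddCommGroup X] {q σ T : ℝ} {u u' : ℝ → X}
    (h : u =ᵐ[volume.restrict (Ioo (0:ℝ) T)] u') : wsNorm q σ T u = wsNorm q σ T u' := by
  unfold wsNorm
  congr 1
  · congr 1
    apply lintegral_congr_ae
    filter_upwards [h] with t ht
    rw [ht]
  · congr 1
    apply lintegral_congr_ae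
    filter_upwards [h] with t ht
    apply lintegral_congr_ae
    filter_upwards [h] with s hs
    rw [ht, hs]

lemma linfNorm_congr {X : Type*} [NormedAddCommGroup X] {T : ℝ} {u u' : ℝ → X}
    (h : u =ᵐ[volume.restrict (Ioo (0:ℝ) T)] u') : linfNorm T u = linfNorm T u' := by
  unfold linfNorm
  apply essSup_congr_ae
  filter_upwards [h] with t ht
  rw [ht]

lemma add_rpow_le' {q : ℝ} (hq : 0 ≤ q) (a b : ℝ≥0∞) : (a + b) ^ q ≤ 2 ^ q * (a ^ q + b ^ q) := by
  calc (a + b) ^ q ≤ (2 * max a b) ^ q := by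
        apply ENNReal.rpow_le_rpow _ hq
        rw [two_mul]
        exact add_le_add (le_max_left a b) (le_max_right a b)
    _ = 2 ^ q * (max a b) ^ q := ENNReal.mul_rpow_of_nonneg _ _ hq
    _ ≤ 2 ^ q * (a ^ q + b ^ q) := by
        gcongr
        rcases le_total a b with h | h
        · rw [max_eq_right h]; exact le_add_self
        · rw [max_eq_left h]; exact self_le_add_right _ _

lemma key {X Y Z : Type*}
    [NormedAddCommGroup X] [NormedSpace ℝ X]
    [NormedAddCommGroup Y] [NormedSpace ℝ Y]
    [NormedAddCommGroup Z] [NormedSpace ℝ Z]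
    (B : X →ₗ[ℝ] Y →ₗ[ℝ] Z) (M' : ℝ) (hM' : 0 < M')
    (hB' : ∀ x y, ‖B x y‖ ≤ M' * ‖x‖ * ‖y‖)
    (q σ : ℝ) (hq : 1 < q) (T : ℝ)
    (u : ℝ → X) (v : ℝ → Y)
    (hu : StronglyMeasurable u) (hv : StronglyMeasurable v)
    (hAu : linfNorm T u ≠ ⊤) (hAv : linfNorm T v ≠ ⊤) :
    wsNorm q σ T (fun t => B (u t) (v t)) ≤
      ENNReal.ofReal (2 * M') *
        (linfNorm T u * wsNorm q σ T v + linfNorm T v * wsNorm q σ T u) := by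
  have hq0 : (0:ℝ) < q := lt_trans one_pos hq
  have hqne : q ≠ 0 := hq0.ne'
  have hiq : (0:ℝ) ≤ 1 / q := by positivity
  have hiq1 : 1 / q ≤ 1 := by rw [div_le_one hq0]; linarith
  set m : ℝ≥0∞ := ENNReal.ofReal M' with hm_def
  have hm : m ≠ ⊤ := ENNReal.ofReal_ne_top
  have hBe : ∀ (x : X) (y : Y), (‖B x y‖₊ : ℝ≥0∞) ≤ m * ‖x‖₊ * ‖y‖₊ := by
    intro x y
    rw [← enorm_eq_nnnorm, ← enorm_eq_nnnorm, ← enorm_eq_nnnorm,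
      ← ofReal_norm, ← ofReal_norm, ← ofReal_norm,
      hm_def, ← ENNReal.ofReal_mul hM'.le, ← ENNReal.ofReal_mul (by positivity)]
    exact ENNReal.ofReal_le_ofReal (hB' x y)
  have hBd : ∀ (x x' : X) (y y' : Y),
      (‖B x y - B x' y'‖₊ : ℝ≥0∞) ≤ m * ‖x‖₊ * ‖y - y'‖₊ + m * ‖y'‖₊ * ‖x - x'‖₊ := by
    intro x x' y y'
    have hdec : B x y - B x' y' = B x (y - y') + B (x - x') y' := by
      simp only [map_sub, LinearMap.sub_apply]
      abel
    rw [hdec]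
    calc (‖B x (y - y') + B (x - x') y'‖₊ : ℝ≥0∞)
        ≤ (‖B x (y - y')‖₊ : ℝ≥0∞) + ‖B (x - x') y'‖₊ := by
          exact_mod_cast nnnorm_add_le _ _
      _ ≤ m * ‖x‖₊ * ‖y - y'‖₊ + m * ‖y'‖₊ * ‖x - x'‖₊ := by
          refine add_le_add (hBe _ _) ?_
          calc (‖B (x - x') y'‖₊ : ℝ≥0∞) ≤ m * ‖x - x'‖₊ * ‖y'‖₊ := hBe _ _
            _ = m * ‖y'‖₊ * ‖x - x'‖₊ := by ring
  set Au := linfNorm T u with hAu_def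
  set Av := linfNorm T v with hAv_def
  have hAu' : ∀ᵐ t ∂(volume.restrict (Ioo (0:ℝ) T)), (‖u t‖₊ : ℝ≥0∞) ≤ Au :=
    ENNReal.ae_le_essSup _
  have hAv' : ∀ᵐ t ∂(volume.restrict (Ioo (0:ℝ) T)), (‖v t‖₊ : ℝ≥0∞) ≤ Av :=
    ENNReal.ae_le_essSup _
  -- abbreviations
  set d : ℝ → ℝ → ℝ≥0∞ := fun t s => (ENNReal.ofReal |t - s|) ^ (1 + σ * q) with hd_def
  set Iu := ∫⁻ t in Ioo (0:ℝ) T, (‖u t‖₊ : ℝ≥0∞) ^ q with hIu_def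
  set Iv := ∫⁻ t in Ioo (0:ℝ) T, (‖v t‖₊ : ℝ≥0∞) ^ q with hIv_def
  set Ju := ∫⁻ t in Ioo (0:ℝ) T, ∫⁻ s in Ioo (0:ℝ) T,
      (‖u t - u s‖₊ : ℝ≥0∞) ^ q / d t s with hJu_def
  set Jv := ∫⁻ t in Ioo (0:ℝ) T, ∫⁻ s in Ioo (0:ℝ) T,
      (‖v t - v s‖₊ : ℝ≥0∞) ^ q / d t s with hJv_def
  have hmAu : m * Au ≠ ⊤ := ENNReal.mul_ne_top hm hAu
  have hmAv : m * Av ≠ ⊤ := ENNReal.mul_ne_top hm hAv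
  -- Step A
  have hA : (∫⁻ t in Ioo (0:ℝ) T, (‖B (u t) (v t)‖₊ : ℝ≥0∞) ^ q) ^ (1 / q) ≤
      m * Au * Iv ^ (1 / q) := by
    have hfin : (m * Au) ^ q ≠ ⊤ := ENNReal.rpow_ne_top_of_nonneg hq0.le hmAu
    have hstep1 : (∫⁻ t in Ioo (0:ℝ) T, (‖B (u t) (v t)‖₊ : ℝ≥0∞) ^ q) ≤ (m * Au) ^ q * Iv := by
      rw [hIv_def, ← lintegral_const_mul' _ _ hfin]
      apply lintegral_mono_ae
      filter_upwards [hAu'] with t ht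
      rw [← ENNReal.mul_rpow_of_nonneg _ _ hq0.le]
      apply ENNReal.rpow_le_rpow _ hq0.le
      calc (‖B (u t) (v t)‖₊ : ℝ≥0∞) ≤ m * ‖u t‖₊ * ‖v t‖₊ := hBe _ _
        _ ≤ m * Au * ‖v t‖₊ := by gcongr
    calc (∫⁻ t in Ioo (0:ℝ) T, (‖B (u t) (v t)‖₊ : ℝ≥0∞) ^ q) ^ (1 / q)
        ≤ ((m * Au) ^ q * Iv) ^ (1 / q) := ENNReal.rpow_le_rpow hstep1 hiq
      _ = m * Au * Iv ^ (1 / q) := by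
          rw [ENNReal.mul_rpow_of_nonneg _ _ hiq, ← ENNReal.rpow_mul, mul_one_div,
            div_self hqne, ENNReal.rpow_one]
  -- Step B
  set c1 : ℝ≥0∞ := 2 ^ q * (m * Au) ^ q with hc1_def
  set c2 : ℝ≥0∞ := 2 ^ q * (m * Av) ^ q with hc2_def
  have hc1 : c1 ≠ ⊤ := ENNReal.mul_ne_top
    (ENNReal.rpow_ne_top_of_nonneg hq0.le (by norm_num))
    (ENNReal.rpow_ne_top_of_nonneg hq0.le hmAu)
  have hc2 : c2 ≠ ⊤ := ENNReal.mul_ne_top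
    (ENNReal.rpow_ne_top_of_nonneg hq0.le (by norm_num))
    (ENNReal.rpow_ne_top_of_nonneg hq0.le hmAv)
  have hptw : ∀ t s : ℝ, (‖u t‖₊ : ℝ≥0∞) ≤ Au → (‖v s‖₊ : ℝ≥0∞) ≤ Av →
      (‖B (u t) (v t) - B (u s) (v s)‖₊ : ℝ≥0∞) ^ q / d t s ≤
        c1 * ((‖v t - v s‖₊ : ℝ≥0∞) ^ q / d t s) +
          c2 * ((‖u t - u s‖₊ : ℝ≥0∞) ^ q / d t s) := by
    intro t s ht hs
    have h1 : (‖B (u t) (v t) - B (u s) (v s)‖₊ : ℝ≥0∞) ^ q ≤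
        c1 * (‖v t - v s‖₊ : ℝ≥0∞) ^ q + c2 * (‖u t - u s‖₊ : ℝ≥0∞) ^ q := by
      calc (‖B (u t) (v t) - B (u s) (v s)‖₊ : ℝ≥0∞) ^ q
          ≤ (m * Au * ‖v t - v s‖₊ + m * Av * ‖u t - u s‖₊) ^ q := by
            apply ENNReal.rpow_le_rpow _ hq0.le
            refine le_trans (hBd (u t) (u s) (v t) (v s)) ?_
            gcongr
        _ ≤ 2 ^ q * ((m * Au * ‖v t - v s‖₊) ^ q + (m * Av * ‖u t - u s‖₊) ^ q) :=
            add_rpow_le' hq0.le _ _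
        _ = c1 * (‖v t - v s‖₊ : ℝ≥0∞) ^ q + c2 * (‖u t - u s‖₊ : ℝ≥0∞) ^ q := by
            rw [ENNReal.mul_rpow_of_nonneg (m * Au) _ hq0.le,
              ENNReal.mul_rpow_of_nonneg (m * Av) _ hq0.le, hc1_def, hc2_def]
            ring
    calc (‖B (u t) (v t) - B (u s) (v s)‖₊ : ℝ≥0∞) ^ q / d t s
        ≤ (c1 * (‖v t - v s‖₊ : ℝ≥0∞) ^ q + c2 * (‖u t - u s‖₊ : ℝ≥0∞) ^ q) / d t s :=
          ENNReal.div_le_div_right h1 _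
      _ = _ := by rw [ENNReal.add_div, mul_div_assoc, mul_div_assoc]
  -- measurability
  have hmeas_v : Measurable (fun p : ℝ × ℝ =>
      (‖v p.1 - v p.2‖₊ : ℝ≥0∞) ^ q / d p.1 p.2) := by
    apply Measurable.div
    · exact (((hv.comp_measurable measurable_fst).sub
        (hv.comp_measurable measurable_snd)).enorm).pow_const q
    · exact ((measurable_fst.sub measurable_snd).abs.ennreal_ofReal).pow_const _
  have hmeas_u : Measurable (fun p : ℝ × ℝ =>
      (‖u p.1 - u p.2‖₊ : ℝ≥0∞) ^ q / d p.1 p.2) := by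
    apply Measurable.div
    · exact (((hu.comp_measurable measurable_fst).sub
        (hu.comp_measurable measurable_snd)).enorm).pow_const q
    · exact ((measurable_fst.sub measurable_snd).abs.ennreal_ofReal).pow_const _
  have hJ : (∫⁻ t in Ioo (0:ℝ) T, ∫⁻ s in Ioo (0:ℝ) T,
      (‖B (u t) (v t) - B (u s) (v s)‖₊ : ℝ≥0∞) ^ q / d t s) ≤ c1 * Jv + c2 * Ju := by
    have step1 : (∫⁻ t in Ioo (0:ℝ) T, ∫⁻ s in Ioo (0:ℝ) T,
        (‖B (u t) (v t) - B (u s) (v s)‖₊ : ℝ≥0∞) ^ q / d t s) ≤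
        ∫⁻ t in Ioo (0:ℝ) T, ∫⁻ s in Ioo (0:ℝ) T,
          (c1 * ((‖v t - v s‖₊ : ℝ≥0∞) ^ q / d t s) +
            c2 * ((‖u t - u s‖₊ : ℝ≥0∞) ^ q / d t s)) := by
      apply lintegral_mono_ae
      filter_upwards [hAu'] with t ht
      apply lintegral_mono_ae
      filter_upwards [hAv'] with s hs
      exact hptw t s ht hs
    have inner_eq : ∀ t : ℝ,
        (∫⁻ s in Ioo (0:ℝ) T, (c1 * ((‖v t - v s‖₊ : ℝ≥0∞) ^ q / d t s) +
          c2 * ((‖u t - u s‖₊ : ℝ≥0∞) ^ q / d t s))) =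
        c1 * (∫⁻ s in Ioo (0:ℝ) T, (‖v t - v s‖₊ : ℝ≥0∞) ^ q / d t s) +
          c2 * (∫⁻ s in Ioo (0:ℝ) T, (‖u t - u s‖₊ : ℝ≥0∞) ^ q / d t s) := by
      intro t
      have h1 : AEMeasurable (fun s => c1 * ((‖v t - v s‖₊ : ℝ≥0∞) ^ q / d t s))
          (volume.restrict (Ioo (0:ℝ) T)) :=
        ((hmeas_v.comp (measurable_const.prodMk measurable_id)).const_mul c1).aemeasurable
      rw [lintegral_add_left' h1, lintegral_const_mul' _ _ hc1, lintegral_const_mul' _ _ hc2]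
    calc _ ≤ _ := step1
      _ = ∫⁻ t in Ioo (0:ℝ) T,
          (c1 * (∫⁻ s in Ioo (0:ℝ) T, (‖v t - v s‖₊ : ℝ≥0∞) ^ q / d t s) +
            c2 * (∫⁻ s in Ioo (0:ℝ) T, (‖u t - u s‖₊ : ℝ≥0∞) ^ q / d t s)) :=
          lintegral_congr fun t => inner_eq t
      _ = c1 * Jv + c2 * Ju := by
          have h1 : AEMeasurable (fun t =>
              c1 * (∫⁻ s in Ioo (0:ℝ) T, (‖v t - v s‖₊ : ℝ≥0∞) ^ q / d t s))
              (volume.restrict (Ioo (0:ℝ) T)) :=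
            (hmeas_v.lintegral_prod_right'.const_mul c1).aemeasurable
          rw [lintegral_add_left' h1, lintegral_const_mul' _ _ hc1, lintegral_const_mul' _ _ hc2]
  have hJq : (∫⁻ t in Ioo (0:ℝ) T, ∫⁻ s in Ioo (0:ℝ) T,
      (‖B (u t) (v t) - B (u s) (v s)‖₊ : ℝ≥0∞) ^ q / d t s) ^ (1 / q) ≤
      2 * (m * Au) * Jv ^ (1 / q) + 2 * (m * Av) * Ju ^ (1 / q) := by
    have e1 : c1 ^ (1 / q) = 2 * (m * Au) := by
      rw [hc1_def, ENNReal.mul_rpow_of_nonneg _ _ hiq, ← ENNReal.rpow_mul, ← ENNReal.rpow_mul,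
        mul_one_div, div_self hqne, ENNReal.rpow_one, ENNReal.rpow_one]
    have e2 : c2 ^ (1 / q) = 2 * (m * Av) := by
      rw [hc2_def, ENNReal.mul_rpow_of_nonneg _ _ hiq, ← ENNReal.rpow_mul, ← ENNReal.rpow_mul,
        mul_one_div, div_self hqne, ENNReal.rpow_one, ENNReal.rpow_one]
    calc (∫⁻ t in Ioo (0:ℝ) T, ∫⁻ s in Ioo (0:ℝ) T,
        (‖B (u t) (v t) - B (u s) (v s)‖₊ : ℝ≥0∞) ^ q / d t s) ^ (1 / q)
        ≤ (c1 * Jv + c2 * Ju) ^ (1 / q) := ENNReal.rpow_le_rpow hJ hiq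
      _ ≤ (c1 * Jv) ^ (1 / q) + (c2 * Ju) ^ (1 / q) :=
          ENNReal.rpow_add_le_add_rpow _ _ hiq hiq1
      _ = 2 * (m * Au) * Jv ^ (1 / q) + 2 * (m * Av) * Ju ^ (1 / q) := by
          rw [ENNReal.mul_rpow_of_nonneg c1 Jv hiq, ENNReal.mul_rpow_of_nonneg c2 Ju hiq, e1, e2]
  -- assemble
  have hC : ENNReal.ofReal (2 * M') = 2 * m := by
    rw [ENNReal.ofReal_mul (by norm_num)]
    norm_num
    rfl
  rw [hC]
  show (∫⁻ t in Ioo (0:ℝ) T, (‖B (u t) (v t)‖₊ : ℝ≥0∞) ^ q) ^ (1 / q) +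
      (∫⁻ t in Ioo (0:ℝ) T, ∫⁻ s in Ioo (0:ℝ) T,
        (‖B (u t) (v t) - B (u s) (v s)‖₊ : ℝ≥0∞) ^ q / d t s) ^ (1 / q) ≤
      2 * m * (Au * (Iv ^ (1/q) + Jv ^ (1/q)) + Av * (Iu ^ (1/q) + Ju ^ (1/q)))
  calc _ ≤ (m * Au * Iv ^ (1 / q)) +
        (2 * (m * Au) * Jv ^ (1 / q) + 2 * (m * Av) * Ju ^ (1 / q)) := add_le_add hA hJq
    _ ≤ (2 * m * Au * Iv ^ (1 / q) + 2 * m * Au * Jv ^ (1 / q)) +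
        (2 * m * Av * Iu ^ (1 / q) + 2 * m * Av * Ju ^ (1 / q)) := by
        rw [add_assoc]
        refine add_le_add ?_ (add_le_add ?_ ?_)
        · rw [show 2 * m * Au * Iv ^ (1/q) = 2 * (m * Au * Iv ^ (1/q)) by ring]
          exact le_mul_of_one_le_left zero_le one_le_two
        · apply le_of_eq; ring
        · rw [show 2 * (m * Av) * Ju ^ (1/q) = 2 * m * Av * Ju ^ (1/q) by ring]
          exact le_add_self
    _ = 2 * m * (Au * (Iv ^ (1/q) + Jv ^ (1/q)) + Av * (Iu ^ (1/q) + Ju ^ (1/q))) := by ring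

theorem statement7 {X Y Z : Type*}
    [NormedAddCommGroup X] [NormedSpace ℝ X] [CompleteSpace X]
    [NormedAddCommGroup Y] [NormedSpace ℝ Y] [CompleteSpace Y]
    [NormedAddCommGroup Z] [NormedSpace ℝ Z] [CompleteSpace Z]
    (B : X →ₗ[ℝ] Y →ₗ[ℝ] Z) (M : ℝ) (hB : ∀ x y, ‖B x y‖ ≤ M * ‖x‖ * ‖y‖)
    (q σ : ℝ) (hq : 1 < q) (hσ1 : 1 / q < σ) (hσ2 : σ < 1) :
    ∃ C > (0 : ℝ), ∀ T > (0 : ℝ), ∀ u : ℝ → X, ∀ v : ℝ → Y,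
      AEStronglyMeasurable u (volume.restrict (Ioo (0:ℝ) T)) →
      AEStronglyMeasurable v (volume.restrict (Ioo (0:ℝ) T)) →
      linfNorm T u < ⊤ → wsNorm q σ T u < ⊤ →
      linfNorm T v < ⊤ → wsNorm q σ T v < ⊤ →
      wsNorm q σ T (fun t => B (u t) (v t)) ≤
        ENNReal.ofReal C *
          (linfNorm T u * wsNorm q σ T v + linfNorm T v * wsNorm q σ T u) := by

  set M' : ℝ := |M| + 1 with hM'_def
  have hM' : 0 < M' := by positivity
  have hB' : ∀ x y, ‖B x y‖ ≤ M' * ‖x‖ * ‖y‖ := by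
    intro x y
    nlinarith [hB x y, le_abs_self M, mul_nonneg (norm_nonneg x) (norm_nonneg y),
      norm_nonneg (B x y)]
  refine ⟨2 * M', by positivity, ?_⟩
  intro T hT u₀ v₀ hu₀ hv₀ hAu₀ _ hAv₀ _
  set u := hu₀.mk u₀ with hu_def
  set v := hv₀.mk v₀ with hv_def
  have hue : u₀ =ᵐ[volume.restrict (Ioo (0:ℝ) T)] u := hu₀.ae_eq_mk
  have hve : v₀ =ᵐ[volume.restrict (Ioo (0:ℝ) T)] v := hv₀.ae_eq_mk
  have hbe : (fun t => B (u₀ t) (v₀ t)) =ᵐ[volume.restrict (Ioo (0:ℝ) T)]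
      (fun t => B (u t) (v t)) := by
    filter_upwards [hue, hve] with t h1 h2
    rw [h1, h2]
  rw [linfNorm_congr hue, linfNorm_congr hve, wsNorm_congr hue, wsNorm_congr hve,
    wsNorm_congr hbe]
  rw [linfNorm_congr hue] at hAu₀
  rw [linfNorm_congr hve] at hAv₀
  exact key B M' hM' hB' q σ hq T u v hu₀.stronglyMeasurable_mk hv₀.stronglyMeasurable_mk
    hAu₀.ne hAv₀.ne
end

section
/- Let Ω ⊆ ℝ^m be a measurable set, q ∈ [1,∞), r ∈ (0,1), N₀ ≥ 1 a natural number, 𝒦 a finite index set, and f_k : Ω → ℝ (k ∈ 𝒦) measurable functions such that every x ∈ Ω satisfies f_k(x) ≠ 0 for at most N₀ indices k. Then ‖∑_{k∈𝒦} f_k‖_{W_q^r(Ω)}^q ≤ 2·(2N₀)^q · ∑_{k∈𝒦} ‖f_k‖_{W_q^r(Ω)}^q. -/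
open MeasureTheory Set ENNReal

/-- The `q`-th power of the Gagliardo seminorm
`[f]_{q,r,Ω}^q = ∫_Ω ∫_Ω |f(x)-f(y)|^q / |x-y|^{m+rq} dx dy`, valued in `ℝ≥0∞`. -/
noncomputable def gagliardoQ {m : ℕ} (q r : ℝ) (Ω : Set (EuclideanSpace ℝ (Fin m)))
    (f : EuclideanSpace ℝ (Fin m) → ℝ) : ℝ≥0∞ :=
  ∫⁻ x in Ω, ∫⁻ y in Ω,
    (‖f x - f y‖₊ : ℝ≥0∞) ^ q / (ENNReal.ofReal (dist x y)) ^ ((m : ℝ) + r * q)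

/-- The `q`-th power of the `W_q^r(Ω)` norm:
`‖f‖_{W_q^r(Ω)}^q = ∫_Ω |f|^q + [f]_{q,r,Ω}^q`, valued in `ℝ≥0∞`. -/
noncomputable def sobolevQ {m : ℕ} (q r : ℝ) (Ω : Set (EuclideanSpace ℝ (Fin m)))
    (f : EuclideanSpace ℝ (Fin m) → ℝ) : ℝ≥0∞ :=
  (∫⁻ x in Ω, (‖f x‖₊ : ℝ≥0∞) ^ q) + gagliardoQ q r Ω f

lemma sum_pow_le_aux {ι : Type*} (n : ℕ) {q : ℝ} (hq : 0 < q) (𝒦 : Finset ι) (a : ι → ℝ≥0∞)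
    (h : (𝒦.filter (fun k => a k ≠ 0)).card ≤ n) :
    (∑ k ∈ 𝒦, a k) ^ q ≤ (n : ℝ≥0∞) ^ q * ∑ k ∈ 𝒦, a k ^ q := by
  classical
  set S := 𝒦.filter fun k => a k ≠ 0 with hS
  have hsum : ∑ k ∈ 𝒦, a k = ∑ k ∈ S, a k := (Finset.sum_filter_ne_zero 𝒦).symm
  set B := (∑ k ∈ S, a k ^ q) ^ (1/q) with hBdef
  have hB : ∀ k ∈ S, a k ≤ B := by
    intro k hk
    have h1 : a k ^ q ≤ ∑ j ∈ S, a j ^ q :=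
      Finset.single_le_sum (f := fun j => a j ^ q) (fun _ _ => zero_le) hk
    calc a k = (a k ^ q) ^ (1/q) := by
          rw [← ENNReal.rpow_mul, mul_one_div, div_self hq.ne', ENNReal.rpow_one]
      _ ≤ B := ENNReal.rpow_le_rpow h1 (by positivity)
  have h1 : ∑ k ∈ S, a k ≤ (n : ℝ≥0∞) * B := by
    calc ∑ k ∈ S, a k ≤ S.card • B := Finset.sum_le_card_nsmul S a B hB
      _ = (S.card : ℝ≥0∞) * B := nsmul_eq_mul _ _
      _ ≤ (n : ℝ≥0∞) * B := mul_le_mul_left (by exact_mod_cast h) B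
  have hBq : B ^ q = ∑ k ∈ S, a k ^ q := by
    rw [hBdef, ← ENNReal.rpow_mul, one_div, inv_mul_cancel₀ hq.ne', ENNReal.rpow_one]
  calc (∑ k ∈ 𝒦, a k) ^ q = (∑ k ∈ S, a k) ^ q := by rw [hsum]
    _ ≤ ((n : ℝ≥0∞) * B) ^ q := ENNReal.rpow_le_rpow h1 hq.le
    _ = (n : ℝ≥0∞) ^ q * B ^ q := ENNReal.mul_rpow_of_nonneg _ _ hq.le
    _ = (n : ℝ≥0∞) ^ q * ∑ k ∈ S, a k ^ q := by rw [hBq]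
    _ ≤ (n : ℝ≥0∞) ^ q * ∑ k ∈ 𝒦, a k ^ q :=
        mul_le_mul_right (Finset.sum_le_sum_of_subset (Finset.filter_subset _ _)) _


theorem statement12 {m : ℕ} (Ω : Set (EuclideanSpace ℝ (Fin m))) (hΩ : MeasurableSet Ω)
    (q r : ℝ) (hq : 1 ≤ q) (hr0 : 0 < r) (hr1 : r < 1)
    (N₀ : ℕ) (hN₀ : 1 ≤ N₀)
    {ι : Type*} (𝒦 : Finset ι) (f : ι → EuclideanSpace ℝ (Fin m) → ℝ)
    (hmeas : ∀ k ∈ 𝒦, Measurable (f k))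
    (hover : ∀ x, {k ∈ (𝒦 : Set ι) | f k x ≠ 0}.ncard ≤ N₀) :
    sobolevQ q r Ω (fun x => ∑ k ∈ 𝒦, f k x) ≤
      2 * (2 * (N₀ : ℝ≥0∞)) ^ q * ∑ k ∈ 𝒦, sobolevQ q r Ω (f k) := by
  classical
  have hqpos : 0 < q := lt_of_lt_of_le one_pos hq
  set c : ℝ≥0∞ := (2 * (N₀ : ℝ≥0∞)) ^ q with hc
  have hcast : ((2 * N₀ : ℕ) : ℝ≥0∞) = 2 * (N₀ : ℝ≥0∞) := by push_cast; ring
  have hc_ne_top : c ≠ ⊤ := by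
    rw [hc]
    exact ENNReal.rpow_ne_top_of_nonneg hqpos.le (by finiteness)
  -- card bounds
  have hcard : ∀ x, (𝒦.filter (fun k => f k x ≠ 0)).card ≤ N₀ := by
    intro x
    have := hover x
    have heq : {k ∈ (𝒦 : Set ι) | f k x ≠ 0} = ↑(𝒦.filter (fun k => f k x ≠ 0)) := by
      ext k; simp
    rwa [heq, Set.ncard_coe_finset] at this
  -- pointwise bound for the Lq part
  have hpt1 : ∀ x, (‖∑ k ∈ 𝒦, f k x‖₊ : ℝ≥0∞) ^ q ≤
      c * ∑ k ∈ 𝒦, (‖f k x‖₊ : ℝ≥0∞) ^ q := by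
    intro x
    have h1 : (‖∑ k ∈ 𝒦, f k x‖₊ : ℝ≥0∞) ≤ ∑ k ∈ 𝒦, (‖f k x‖₊ : ℝ≥0∞) := by
      exact_mod_cast nnnorm_sum_le 𝒦 fun k => f k x
    have hcard' : (𝒦.filter (fun k => (‖f k x‖₊ : ℝ≥0∞) ≠ 0)).card ≤ 2 * N₀ := by
      refine le_trans (le_trans (Finset.card_le_card ?_) (hcard x)) ?_
      · intro k hk
        simp only [Finset.mem_filter] at hk ⊢
        refine ⟨hk.1, fun h0 => hk.2 (by simp [h0])⟩
      · omega
    have h2 := sum_pow_le_aux (2 * N₀) hqpos 𝒦 (fun k => (‖f k x‖₊ : ℝ≥0∞)) hcard'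
    calc (‖∑ k ∈ 𝒦, f k x‖₊ : ℝ≥0∞) ^ q
        ≤ (∑ k ∈ 𝒦, (‖f k x‖₊ : ℝ≥0∞)) ^ q := ENNReal.rpow_le_rpow h1 hqpos.le
      _ ≤ ((2 * N₀ : ℕ) : ℝ≥0∞) ^ q * ∑ k ∈ 𝒦, (‖f k x‖₊ : ℝ≥0∞) ^ q := h2
      _ = c * ∑ k ∈ 𝒦, (‖f k x‖₊ : ℝ≥0∞) ^ q := by rw [hcast, hc]
  -- pointwise bound for the Gagliardo part (numerator)
  have hpt2 : ∀ x y, (‖(∑ k ∈ 𝒦, f k x) - ∑ k ∈ 𝒦, f k y‖₊ : ℝ≥0∞) ^ q ≤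
      c * ∑ k ∈ 𝒦, (‖f k x - f k y‖₊ : ℝ≥0∞) ^ q := by
    intro x y
    have hdiff : (∑ k ∈ 𝒦, f k x) - ∑ k ∈ 𝒦, f k y = ∑ k ∈ 𝒦, (f k x - f k y) :=
      (Finset.sum_sub_distrib _ _).symm
    have h1 : (‖(∑ k ∈ 𝒦, f k x) - ∑ k ∈ 𝒦, f k y‖₊ : ℝ≥0∞) ≤
        ∑ k ∈ 𝒦, (‖f k x - f k y‖₊ : ℝ≥0∞) := by
      rw [hdiff]
      exact_mod_cast nnnorm_sum_le 𝒦 fun k => f k x - f k y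
    have hcard' : (𝒦.filter (fun k => (‖f k x - f k y‖₊ : ℝ≥0∞) ≠ 0)).card ≤ 2 * N₀ := by
      have hsub : 𝒦.filter (fun k => (‖f k x - f k y‖₊ : ℝ≥0∞) ≠ 0) ⊆
          𝒦.filter (fun k => f k x ≠ 0) ∪ 𝒦.filter (fun k => f k y ≠ 0) := by
        intro k hk
        simp only [Finset.mem_filter, Finset.mem_union] at hk ⊢
        by_contra hcon
        push_neg at hcon
        have hx := hcon.1 hk.1
        have hy := hcon.2 hk.1
        exact hk.2 (by simp [hx, hy])
      calc (𝒦.filter (fun k => (‖f k x - f k y‖₊ : ℝ≥0∞) ≠ 0)).card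
          ≤ (𝒦.filter (fun k => f k x ≠ 0) ∪ 𝒦.filter (fun k => f k y ≠ 0)).card :=
            Finset.card_le_card hsub
        _ ≤ (𝒦.filter (fun k => f k x ≠ 0)).card + (𝒦.filter (fun k => f k y ≠ 0)).card :=
            Finset.card_union_le _ _
        _ ≤ 2 * N₀ := by have := hcard x; have := hcard y; omega
    have h2 := sum_pow_le_aux (2 * N₀) hqpos 𝒦 (fun k => (‖f k x - f k y‖₊ : ℝ≥0∞)) hcard'
    calc (‖(∑ k ∈ 𝒦, f k x) - ∑ k ∈ 𝒦, f k y‖₊ : ℝ≥0∞) ^ q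
        ≤ (∑ k ∈ 𝒦, (‖f k x - f k y‖₊ : ℝ≥0∞)) ^ q := ENNReal.rpow_le_rpow h1 hqpos.le
      _ ≤ ((2 * N₀ : ℕ) : ℝ≥0∞) ^ q * ∑ k ∈ 𝒦, (‖f k x - f k y‖₊ : ℝ≥0∞) ^ q := h2
      _ = c * ∑ k ∈ 𝒦, (‖f k x - f k y‖₊ : ℝ≥0∞) ^ q := by rw [hcast, hc]
  -- measurability
  have hmeas1 : ∀ k ∈ 𝒦, Measurable fun x => (‖f k x‖₊ : ℝ≥0∞) ^ q := by
    intro k hk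
    exact ((hmeas k hk).nnnorm.coe_nnreal_ennreal).pow_const q
  set D : EuclideanSpace ℝ (Fin m) → EuclideanSpace ℝ (Fin m) → ℝ≥0∞ :=
    fun x y => (ENNReal.ofReal (dist x y)) ^ ((m : ℝ) + r * q) with hD
  have hmeasD : Measurable fun p : EuclideanSpace ℝ (Fin m) × EuclideanSpace ℝ (Fin m) =>
      D p.1 p.2 := by
    apply Measurable.pow_const
    exact (measurable_dist).ennreal_ofReal
  have hmeas2 : ∀ k ∈ 𝒦, Measurable fun p : EuclideanSpace ℝ (Fin m) × EuclideanSpace ℝ (Fin m) =>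
      (‖f k p.1 - f k p.2‖₊ : ℝ≥0∞) ^ q / D p.1 p.2 := by
    intro k hk
    apply Measurable.div _ hmeasD
    exact ((((hmeas k hk).comp measurable_fst).sub
      ((hmeas k hk).comp measurable_snd)).nnnorm.coe_nnreal_ennreal).pow_const q
  -- Lq part
  have hL : (∫⁻ x in Ω, (‖∑ k ∈ 𝒦, f k x‖₊ : ℝ≥0∞) ^ q) ≤
      c * ∑ k ∈ 𝒦, ∫⁻ x in Ω, (‖f k x‖₊ : ℝ≥0∞) ^ q := by
    calc (∫⁻ x in Ω, (‖∑ k ∈ 𝒦, f k x‖₊ : ℝ≥0∞) ^ q)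
        ≤ ∫⁻ x in Ω, c * ∑ k ∈ 𝒦, (‖f k x‖₊ : ℝ≥0∞) ^ q := lintegral_mono hpt1
      _ = c * ∫⁻ x in Ω, ∑ k ∈ 𝒦, (‖f k x‖₊ : ℝ≥0∞) ^ q := lintegral_const_mul' _ _ hc_ne_top
      _ = c * ∑ k ∈ 𝒦, ∫⁻ x in Ω, (‖f k x‖₊ : ℝ≥0∞) ^ q := by
          rw [lintegral_finset_sum _ hmeas1]
  -- Gagliardo part
  have hG : gagliardoQ q r Ω (fun x => ∑ k ∈ 𝒦, f k x) ≤
      c * ∑ k ∈ 𝒦, gagliardoQ q r Ω (f k) := by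
    have hinner : ∀ x, (∫⁻ y in Ω,
        (‖(∑ k ∈ 𝒦, f k x) - ∑ k ∈ 𝒦, f k y‖₊ : ℝ≥0∞) ^ q / D x y) ≤
        c * ∑ k ∈ 𝒦, ∫⁻ y in Ω, (‖f k x - f k y‖₊ : ℝ≥0∞) ^ q / D x y := by
      intro x
      calc (∫⁻ y in Ω, (‖(∑ k ∈ 𝒦, f k x) - ∑ k ∈ 𝒦, f k y‖₊ : ℝ≥0∞) ^ q / D x y)
          ≤ ∫⁻ y in Ω, c * ∑ k ∈ 𝒦, (‖f k x - f k y‖₊ : ℝ≥0∞) ^ q / D x y := by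
            apply lintegral_mono
            intro y
            calc (‖(∑ k ∈ 𝒦, f k x) - ∑ k ∈ 𝒦, f k y‖₊ : ℝ≥0∞) ^ q / D x y
                ≤ (c * ∑ k ∈ 𝒦, (‖f k x - f k y‖₊ : ℝ≥0∞) ^ q) / D x y :=
                  ENNReal.div_le_div_right (hpt2 x y) _
              _ = c * ∑ k ∈ 𝒦, (‖f k x - f k y‖₊ : ℝ≥0∞) ^ q / D x y := by
                  simp only [div_eq_mul_inv, mul_assoc, Finset.sum_mul]
        _ = c * ∫⁻ y in Ω, ∑ k ∈ 𝒦, (‖f k x - f k y‖₊ : ℝ≥0∞) ^ q / D x y :=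
            lintegral_const_mul' _ _ hc_ne_top
        _ = c * ∑ k ∈ 𝒦, ∫⁻ y in Ω, (‖f k x - f k y‖₊ : ℝ≥0∞) ^ q / D x y := by
            rw [lintegral_finset_sum]
            intro k hk
            exact (hmeas2 k hk).comp (measurable_prodMk_left)
    have hmeasG : ∀ k ∈ 𝒦, Measurable fun x =>
        ∫⁻ y in Ω, (‖f k x - f k y‖₊ : ℝ≥0∞) ^ q / D x y := by
      intro k hk
      exact (hmeas2 k hk).lintegral_prod_right'
    calc gagliardoQ q r Ω (fun x => ∑ k ∈ 𝒦, f k x)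
        ≤ ∫⁻ x in Ω, c * ∑ k ∈ 𝒦, ∫⁻ y in Ω, (‖f k x - f k y‖₊ : ℝ≥0∞) ^ q / D x y :=
          lintegral_mono hinner
      _ = c * ∫⁻ x in Ω, ∑ k ∈ 𝒦, ∫⁻ y in Ω, (‖f k x - f k y‖₊ : ℝ≥0∞) ^ q / D x y :=
          lintegral_const_mul' _ _ hc_ne_top
      _ = c * ∑ k ∈ 𝒦, ∫⁻ x in Ω, ∫⁻ y in Ω, (‖f k x - f k y‖₊ : ℝ≥0∞) ^ q / D x y := by
          rw [lintegral_finset_sum _ hmeasG]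
      _ = c * ∑ k ∈ 𝒦, gagliardoQ q r Ω (f k) := rfl
  -- combine
  have hS1 : (∑ k ∈ 𝒦, ∫⁻ x in Ω, (‖f k x‖₊ : ℝ≥0∞) ^ q) ≤ ∑ k ∈ 𝒦, sobolevQ q r Ω (f k) :=
    Finset.sum_le_sum fun k _ => le_add_right le_rfl
  have hS2 : (∑ k ∈ 𝒦, gagliardoQ q r Ω (f k)) ≤ ∑ k ∈ 𝒦, sobolevQ q r Ω (f k) :=
    Finset.sum_le_sum fun k _ => le_add_left le_rfl
  calc sobolevQ q r Ω (fun x => ∑ k ∈ 𝒦, f k x)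
      ≤ c * (∑ k ∈ 𝒦, sobolevQ q r Ω (f k)) + c * (∑ k ∈ 𝒦, sobolevQ q r Ω (f k)) := by
        refine add_le_add ?_ ?_
        · exact le_trans hL (mul_le_mul_right hS1 c)
        · exact le_trans hG (mul_le_mul_right hS2 c)
    _ = 2 * (2 * (N₀ : ℝ≥0∞)) ^ q * ∑ k ∈ 𝒦, sobolevQ q r Ω (f k) := by
        rw [← two_mul, ← mul_assoc, hc]
end

section
/- Let Ω ⊆ ℝ^m be a measurable set, q ∈ [1,∞), r ∈ (0,1), 𝒦 a finite index set with cardinality |𝒦| ≤ K₁, C > 0, K₀ ≥ 0, N₀ ≥ 1, and let ψ_k : Ω → ℝ (k ∈ 𝒦) be bounded measurable functions with |ψ_k(x)| ≤ C for all x, [ψ_k]_{q,r,Ω}^q ≤ K₀ for every k, and such that every x ∈ Ω satisfies ψ_k(x) ≠ 0 for at most N₀ indices k. Then for every bounded measurable f : Ω → ℝ with [f]_{q,r,Ω} < ∞: ∑_{k∈𝒦} [ψ_k f]_{q,r,Ω}^q ≤ 2^q·( N₀·C^q·[f]_{q,r,Ω}^q + K₁·K₀·‖f‖_{L_∞(Ω)}^q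 ). -/
open MeasureTheory Set ENNReal

private lemma aux_rpow_add_le (a b : ℝ≥0∞) {q : ℝ} (hq : 0 ≤ q) :
    (a + b) ^ q ≤ 2 ^ q * (a ^ q + b ^ q) := by
  calc (a + b) ^ q ≤ (2 * max a b) ^ q := by
        apply ENNReal.rpow_le_rpow _ hq
        rw [two_mul]
        exact add_le_add (le_max_left a b) (le_max_right a b)
    _ = 2 ^ q * (max a b) ^ q := ENNReal.mul_rpow_of_nonneg _ _ hq
    _ ≤ 2 ^ q * (a ^ q + b ^ q) := by
        gcongr
        rcases le_total a b with h | h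
        · rw [max_eq_right h]; exact le_add_self
        · rw [max_eq_left h]; exact le_self_add

private lemma aux_meas_kernel {m : ℕ} {g : EuclideanSpace ℝ (Fin m) → ℝ}
    (hg : Measurable g) (q s : ℝ) :
    Measurable (Function.uncurry fun x y =>
      (‖g x - g y‖₊ : ℝ≥0∞) ^ q / (ENNReal.ofReal (dist x y)) ^ s) := by
  apply Measurable.div
  · exact (((hg.comp measurable_fst).sub
      (hg.comp measurable_snd)).nnnorm.coe_nnreal_ennreal).pow_const q
  · exact (measurable_dist.ennreal_ofReal).pow_const s

private lemma aux_sum_lintegral_le {α : Type*} [MeasurableSpace α] (μ : Measure α)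
    {ι : Type*} (s : Finset ι) (f : ι → α → ℝ≥0∞) :
    ∑ k ∈ s, ∫⁻ x, f k x ∂μ ≤ ∫⁻ x, ∑ k ∈ s, f k x ∂μ := by
  classical
  induction s using Finset.induction with
  | empty => simp
  | insert a t h ih =>
      simp only [Finset.sum_insert h]
      exact le_trans (add_le_add le_rfl ih) (le_lintegral_add _ _)

theorem statement16 {m : ℕ} (Ω : Set (EuclideanSpace ℝ (Fin m))) (hΩ : MeasurableSet Ω)
    (q r : ℝ) (hq : 1 ≤ q) (hr0 : 0 < r) (hr1 : r < 1)
    (C K₀ : ℝ) (hC : 0 < C) (hK₀ : 0 ≤ K₀) (K₁ N₀ : ℕ) (hN₀ : 1 ≤ N₀)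
    {ι : Type*} (𝒦 : Finset ι) (hcard : 𝒦.card ≤ K₁)
    (ψ : ι → EuclideanSpace ℝ (Fin m) → ℝ)
    (hψmeas : ∀ k ∈ 𝒦, Measurable (ψ k))
    (hψbd : ∀ k ∈ 𝒦, ∀ x, |ψ k x| ≤ C)
    (hψgag : ∀ k ∈ 𝒦, gagliardoQ q r Ω (ψ k) ≤ ENNReal.ofReal K₀)
    (hover : ∀ x, {k ∈ (𝒦 : Set ι) | ψ k x ≠ 0}.ncard ≤ N₀)
    (f : EuclideanSpace ℝ (Fin m) → ℝ) (hfmeas : Measurable f)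
    (hfbd : ∃ D : ℝ, ∀ x, |f x| ≤ D)
    (hfgag : gagliardoQ q r Ω f < ⊤) :
    ∑ k ∈ 𝒦, gagliardoQ q r Ω (fun x => ψ k x * f x) ≤
      (2 : ℝ≥0∞) ^ q *
        ((N₀ : ℝ≥0∞) * ENNReal.ofReal C ^ q * gagliardoQ q r Ω f +
          (K₁ : ℝ≥0∞) * ENNReal.ofReal K₀ *
            (essSup (fun x => (‖f x‖₊ : ℝ≥0∞)) (volume.restrict Ω)) ^ q) := by
  classical
  have hq0 : (0:ℝ) ≤ q := by linarith
  have hqpos : (0:ℝ) < q := by linarith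
  set s : ℝ := (m : ℝ) + r * q with hs
  set M : ℝ≥0∞ := essSup (fun x => (‖f x‖₊ : ℝ≥0∞)) (volume.restrict Ω) with hM
  obtain ⟨D, hD⟩ := hfbd
  have hMfin : M ≠ ⊤ := by
    refine ne_top_of_le_ne_top ofReal_ne_top (essSup_le_of_ae_le (ENNReal.ofReal D) ?_)
    filter_upwards with x
    rw [← ENNReal.ofReal_coe_nnreal, coe_nnnorm]
    exact ofReal_le_ofReal ((Real.norm_eq_abs _ ▸ hD x))
  have hMq : M ^ q ≠ ⊤ := ENNReal.rpow_ne_top_of_nonneg hq0 hMfin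
  have h2q : (2:ℝ≥0∞) ^ q ≠ ⊤ := ENNReal.rpow_ne_top_of_nonneg hq0 (by norm_num)
  set G : EuclideanSpace ℝ (Fin m) → ℝ≥0∞ := fun x =>
    ∫⁻ y in Ω, (‖f x - f y‖₊ : ℝ≥0∞) ^ q / (ENNReal.ofReal (dist x y)) ^ s with hG
  have hGf : gagliardoQ q r Ω f = ∫⁻ x in Ω, G x := rfl
  -- per-k bound
  have key : ∀ k ∈ 𝒦, gagliardoQ q r Ω (fun x => ψ k x * f x) ≤
      2 ^ q * ((∫⁻ x in Ω, (‖ψ k x‖₊ : ℝ≥0∞) ^ q * G x) + M ^ q * gagliardoQ q r Ω (ψ k)) := by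
    intro k hk
    have hψk := hψmeas k hk
    have inner : ∀ x, (∫⁻ y in Ω,
        (‖ψ k x * f x - ψ k y * f y‖₊ : ℝ≥0∞) ^ q / (ENNReal.ofReal (dist x y)) ^ s) ≤
        2 ^ q * ((‖ψ k x‖₊ : ℝ≥0∞) ^ q * G x +
          M ^ q * ∫⁻ y in Ω, (‖ψ k x - ψ k y‖₊ : ℝ≥0∞) ^ q / (ENNReal.ofReal (dist x y)) ^ s) := by
      intro x
      have hptwise : ∀ y,
          (‖ψ k x * f x - ψ k y * f y‖₊ : ℝ≥0∞) ^ q / (ENNReal.ofReal (dist x y)) ^ s ≤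
          2 ^ q * ((‖ψ k x‖₊ : ℝ≥0∞) ^ q *
              ((‖f x - f y‖₊ : ℝ≥0∞) ^ q / (ENNReal.ofReal (dist x y)) ^ s) +
            (‖f y‖₊ : ℝ≥0∞) ^ q *
              ((‖ψ k x - ψ k y‖₊ : ℝ≥0∞) ^ q / (ENNReal.ofReal (dist x y)) ^ s)) := by
        intro y
        have h1 : (‖ψ k x * f x - ψ k y * f y‖₊ : ℝ≥0∞) ≤
            (‖ψ k x‖₊ : ℝ≥0∞) * (‖f x - f y‖₊ : ℝ≥0∞) +
            (‖f y‖₊ : ℝ≥0∞) * (‖ψ k x - ψ k y‖₊ : ℝ≥0∞) := by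
          have he : ψ k x * f x - ψ k y * f y
              = ψ k x * (f x - f y) + (ψ k x - ψ k y) * f y := by ring
          calc (‖ψ k x * f x - ψ k y * f y‖₊ : ℝ≥0∞)
              = (‖ψ k x * (f x - f y) + (ψ k x - ψ k y) * f y‖₊ : ℝ≥0∞) := by rw [he]
            _ ≤ (‖ψ k x * (f x - f y)‖₊ : ℝ≥0∞) + (‖(ψ k x - ψ k y) * f y‖₊ : ℝ≥0∞) := by
                exact_mod_cast nnnorm_add_le _ _
            _ = (‖ψ k x‖₊ : ℝ≥0∞) * (‖f x - f y‖₊ : ℝ≥0∞) +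
                (‖f y‖₊ : ℝ≥0∞) * (‖ψ k x - ψ k y‖₊ : ℝ≥0∞) := by
                rw [nnnorm_mul, nnnorm_mul]
                push_cast
                ring
        calc (‖ψ k x * f x - ψ k y * f y‖₊ : ℝ≥0∞) ^ q / (ENNReal.ofReal (dist x y)) ^ s
            ≤ ((‖ψ k x‖₊ : ℝ≥0∞) * (‖f x - f y‖₊ : ℝ≥0∞) +
               (‖f y‖₊ : ℝ≥0∞) * (‖ψ k x - ψ k y‖₊ : ℝ≥0∞)) ^ q
                / (ENNReal.ofReal (dist x y)) ^ s :=
              ENNReal.div_le_div_right (ENNReal.rpow_le_rpow h1 hq0) _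
          _ ≤ (2 ^ q * (((‖ψ k x‖₊ : ℝ≥0∞) * (‖f x - f y‖₊ : ℝ≥0∞)) ^ q +
               ((‖f y‖₊ : ℝ≥0∞) * (‖ψ k x - ψ k y‖₊ : ℝ≥0∞)) ^ q))
                / (ENNReal.ofReal (dist x y)) ^ s :=
              ENNReal.div_le_div_right (aux_rpow_add_le _ _ hq0) _
          _ = 2 ^ q * ((‖ψ k x‖₊ : ℝ≥0∞) ^ q *
                ((‖f x - f y‖₊ : ℝ≥0∞) ^ q / (ENNReal.ofReal (dist x y)) ^ s) +
              (‖f y‖₊ : ℝ≥0∞) ^ q *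
                ((‖ψ k x - ψ k y‖₊ : ℝ≥0∞) ^ q / (ENNReal.ofReal (dist x y)) ^ s)) := by
              rw [ENNReal.mul_rpow_of_nonneg _ _ hq0, ENNReal.mul_rpow_of_nonneg _ _ hq0,
                mul_div_assoc, ENNReal.add_div, mul_div_assoc, mul_div_assoc]
      have measA : Measurable fun y =>
          (‖f x - f y‖₊ : ℝ≥0∞) ^ q / (ENNReal.ofReal (dist x y)) ^ s := by
        have := (aux_meas_kernel hfmeas q s).comp (measurable_prodMk_left : Measurable fun y => (x, y))
        exact this
      have measB : Measurable fun y =>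
          (‖ψ k x - ψ k y‖₊ : ℝ≥0∞) ^ q / (ENNReal.ofReal (dist x y)) ^ s := by
        have := (aux_meas_kernel hψk q s).comp (measurable_prodMk_left : Measurable fun y => (x, y))
        exact this
      calc (∫⁻ y in Ω, (‖ψ k x * f x - ψ k y * f y‖₊ : ℝ≥0∞) ^ q
              / (ENNReal.ofReal (dist x y)) ^ s)
          ≤ ∫⁻ y in Ω, 2 ^ q * ((‖ψ k x‖₊ : ℝ≥0∞) ^ q *
                ((‖f x - f y‖₊ : ℝ≥0∞) ^ q / (ENNReal.ofReal (dist x y)) ^ s) +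
              (‖f y‖₊ : ℝ≥0∞) ^ q *
                ((‖ψ k x - ψ k y‖₊ : ℝ≥0∞) ^ q / (ENNReal.ofReal (dist x y)) ^ s)) :=
            lintegral_mono fun y => hptwise y
        _ = 2 ^ q * ∫⁻ y in Ω, ((‖ψ k x‖₊ : ℝ≥0∞) ^ q *
                ((‖f x - f y‖₊ : ℝ≥0∞) ^ q / (ENNReal.ofReal (dist x y)) ^ s) +
              (‖f y‖₊ : ℝ≥0∞) ^ q *
                ((‖ψ k x - ψ k y‖₊ : ℝ≥0∞) ^ q / (ENNReal.ofReal (dist x y)) ^ s)) :=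
            lintegral_const_mul' _ _ h2q
        _ = 2 ^ q * ((∫⁻ y in Ω, (‖ψ k x‖₊ : ℝ≥0∞) ^ q *
                ((‖f x - f y‖₊ : ℝ≥0∞) ^ q / (ENNReal.ofReal (dist x y)) ^ s)) +
              ∫⁻ y in Ω, (‖f y‖₊ : ℝ≥0∞) ^ q *
                ((‖ψ k x - ψ k y‖₊ : ℝ≥0∞) ^ q / (ENNReal.ofReal (dist x y)) ^ s)) := by
            rw [lintegral_add_left (measA.const_mul _)]
        _ ≤ 2 ^ q * ((‖ψ k x‖₊ : ℝ≥0∞) ^ q * G x +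
              M ^ q * ∫⁻ y in Ω, (‖ψ k x - ψ k y‖₊ : ℝ≥0∞) ^ q
                / (ENNReal.ofReal (dist x y)) ^ s) := by
            gcongr 2 ^ q * (?_ + ?_)
            · rw [lintegral_const_mul' _ _
                (ENNReal.rpow_ne_top_of_nonneg hq0 coe_ne_top)]
            · rw [← lintegral_const_mul' _ _ hMq]
              refine lintegral_mono_ae ?_
              filter_upwards [ENNReal.ae_le_essSup (fun x => (‖f x‖₊ : ℝ≥0∞))] with y hy
              exact mul_le_mul_of_nonneg_right (ENNReal.rpow_le_rpow hy hq0) (by positivity)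
    calc gagliardoQ q r Ω (fun x => ψ k x * f x)
        ≤ ∫⁻ x in Ω, 2 ^ q * ((‖ψ k x‖₊ : ℝ≥0∞) ^ q * G x +
            M ^ q * ∫⁻ y in Ω, (‖ψ k x - ψ k y‖₊ : ℝ≥0∞) ^ q
              / (ENNReal.ofReal (dist x y)) ^ s) :=
          lintegral_mono fun x => inner x
      _ = 2 ^ q * ∫⁻ x in Ω, ((‖ψ k x‖₊ : ℝ≥0∞) ^ q * G x +
            M ^ q * ∫⁻ y in Ω, (‖ψ k x - ψ k y‖₊ : ℝ≥0∞) ^ q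
              / (ENNReal.ofReal (dist x y)) ^ s) := lintegral_const_mul' _ _ h2q
      _ = 2 ^ q * ((∫⁻ x in Ω, (‖ψ k x‖₊ : ℝ≥0∞) ^ q * G x) +
            ∫⁻ x in Ω, M ^ q * ∫⁻ y in Ω, (‖ψ k x - ψ k y‖₊ : ℝ≥0∞) ^ q
              / (ENNReal.ofReal (dist x y)) ^ s) := by
          rw [lintegral_add_left]
          exact ((hψk.nnnorm.coe_nnreal_ennreal.pow_const q).mul
            ((aux_meas_kernel hfmeas q s).lintegral_prod_right))
      _ = 2 ^ q * ((∫⁻ x in Ω, (‖ψ k x‖₊ : ℝ≥0∞) ^ q * G x) +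
            M ^ q * gagliardoQ q r Ω (ψ k)) := by
          rw [lintegral_const_mul' _ _ hMq]; rfl
  -- pointwise overlap bound
  have hsum : ∀ x, ∑ k ∈ 𝒦, (‖ψ k x‖₊ : ℝ≥0∞) ^ q ≤ (N₀ : ℝ≥0∞) * ENNReal.ofReal C ^ q := by
    intro x
    set T : Finset ι := 𝒦.filter (fun k => ψ k x ≠ 0) with hT
    have hTcard : T.card ≤ N₀ := by
      have := hover x
      have hset : {k ∈ (𝒦 : Set ι) | ψ k x ≠ 0} = (T : Set ι) := by
        ext k; simp [hT]
      rwa [hset, Set.ncard_coe_finset] at this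
    have hsub : ∑ k ∈ T, (‖ψ k x‖₊ : ℝ≥0∞) ^ q = ∑ k ∈ 𝒦, (‖ψ k x‖₊ : ℝ≥0∞) ^ q := by
      apply Finset.sum_subset (Finset.filter_subset _ _)
      intro k hk hk'
      have : ψ k x = 0 := by
        by_contra h
        exact hk' (Finset.mem_filter.mpr ⟨hk, h⟩)
      simp [this, ENNReal.zero_rpow_of_pos hqpos]
    rw [← hsub]
    calc ∑ k ∈ T, (‖ψ k x‖₊ : ℝ≥0∞) ^ q ≤ ∑ _k ∈ T, ENNReal.ofReal C ^ q := by
          refine Finset.sum_le_sum fun k hk => ?_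
          refine ENNReal.rpow_le_rpow ?_ hq0
          rw [← ENNReal.ofReal_coe_nnreal, coe_nnnorm]
          exact ofReal_le_ofReal (Real.norm_eq_abs _ ▸ hψbd k (Finset.filter_subset _ _ hk) x)
      _ = (T.card : ℝ≥0∞) * ENNReal.ofReal C ^ q := by rw [Finset.sum_const, nsmul_eq_mul]
      _ ≤ (N₀ : ℝ≥0∞) * ENNReal.ofReal C ^ q := by
          gcongr <;> exact_mod_cast hTcard
  -- combine
  calc ∑ k ∈ 𝒦, gagliardoQ q r Ω (fun x => ψ k x * f x)
      ≤ ∑ k ∈ 𝒦, 2 ^ q * ((∫⁻ x in Ω, (‖ψ k x‖₊ : ℝ≥0∞) ^ q * G x) +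
          M ^ q * gagliardoQ q r Ω (ψ k)) := Finset.sum_le_sum key
    _ = 2 ^ q * ((∑ k ∈ 𝒦, ∫⁻ x in Ω, (‖ψ k x‖₊ : ℝ≥0∞) ^ q * G x) +
          ∑ k ∈ 𝒦, M ^ q * gagliardoQ q r Ω (ψ k)) := by
        rw [← Finset.mul_sum, Finset.sum_add_distrib]
    _ ≤ 2 ^ q * (((N₀ : ℝ≥0∞) * ENNReal.ofReal C ^ q * gagliardoQ q r Ω f) +
          (K₁ : ℝ≥0∞) * ENNReal.ofReal K₀ * M ^ q) := by
        gcongr 2 ^ q * (?_ + ?_)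
        · calc (∑ k ∈ 𝒦, ∫⁻ x in Ω, (‖ψ k x‖₊ : ℝ≥0∞) ^ q * G x)
              ≤ ∫⁻ x in Ω, ∑ k ∈ 𝒦, (‖ψ k x‖₊ : ℝ≥0∞) ^ q * G x :=
                aux_sum_lintegral_le _ _ _
            _ ≤ ∫⁻ x in Ω, ((N₀ : ℝ≥0∞) * ENNReal.ofReal C ^ q) * G x := by
                refine lintegral_mono fun x => ?_
                rw [← Finset.sum_mul]
                exact mul_le_mul_of_nonneg_right (hsum x) (by positivity)
            _ = (N₀ : ℝ≥0∞) * ENNReal.ofReal C ^ q * gagliardoQ q r Ω f := by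
                rw [lintegral_const_mul' _ _ (ENNReal.mul_ne_top (natCast_ne_top N₀)
                  (ENNReal.rpow_ne_top_of_nonneg hq0 ofReal_ne_top)), hGf]
        · calc ∑ k ∈ 𝒦, M ^ q * gagliardoQ q r Ω (ψ k)
              ≤ ∑ _k ∈ 𝒦, M ^ q * ENNReal.ofReal K₀ :=
                Finset.sum_le_sum fun k hk => mul_le_mul_of_nonneg_left (hψgag k hk) (by positivity)
            _ = (𝒦.card : ℝ≥0∞) * (M ^ q * ENNReal.ofReal K₀) := by
                rw [Finset.sum_const, nsmul_eq_mul]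
            _ ≤ (K₁ : ℝ≥0∞) * (M ^ q * ENNReal.ofReal K₀) := by
                gcongr <;> exact_mod_cast hcard
            _ = (K₁ : ℝ≥0∞) * ENNReal.ofReal K₀ * M ^ q := by ring
end
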